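/- Every proper monomial ideal I in S = k[x_1,…,x_n] admits a Stanley filtration (x^{u_1},σ_1),…,(x^{u_m},σ_m) of S/I such that u_1 = 0 and, for every index i with u_i ≠ 0, there exist an index j < i and an ℓ ∉ σ_j with u_i = u_j + e_ℓ, where e_ℓ is the ℓ-th standard basis vector of ℕ^n. -/

import Mathlib

open MvPolynomial

open MvPolynomial

/-- `I` is a monomial ideal: it is generated by a set of monomials `x^u`. -/
def IsMonomialIdeal {k : Type} [Field k] {n : ℕ} (I : Ideal (MvPolynomial (Fin n) k)) : Prop :=
  ∃ G : Set (Fin n →₀ ℕ), I = Ideal.span ((fun u => (monomial u (1 : k))) '' G)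

/-- The set of exponent vectors of monomials in the pair `(x^u, σ)`. -/
def stanleyPairSet {n : ℕ} (u : Fin n →₀ ℕ) (σ : Finset (Fin n)) : Set (Fin n →₀ ℕ) :=
  {w | ∃ v : Fin n →₀ ℕ, (∀ i, v i ≠ 0 → i ∈ σ) ∧ w = u + v}

/-- A Stanley decomposition of `S/I`. -/
def IsStanleyDecomp {k : Type} [Field k] {n : ℕ} (I : Ideal (MvPolynomial (Fin n) k))
    (𝔖 : Finset ((Fin n →₀ ℕ) × Finset (Fin n))) : Prop :=
  (∀ p ∈ 𝔖, ∀ q ∈ 𝔖, p ≠ q → Disjoint (stanleyPairSet p.1 p.2) (stanleyPairSet q.1 q.2)) ∧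
  (⋃ p ∈ (𝔖 : Set ((Fin n →₀ ℕ) × Finset (Fin n))), stanleyPairSet p.1 p.2)
      = {w | monomial w (1 : k) ∉ I}

/-- A Stanley filtration of `S/I`: an ordered Stanley decomposition
`(x^{u_1},σ_1),…,(x^{u_m},σ_m)` such that for every `1 ≤ j ≤ m` the first `j` pairs form a
Stanley decomposition of `S/(I + ⟨x^{u_{j+1}},…,x^{u_m}⟩)`. -/
def IsStanleyFiltration {k : Type} [Field k] {n : ℕ} (I : Ideal (MvPolynomial (Fin n) k))
    (L : List ((Fin n →₀ ℕ) × Finset (Fin n))) : Prop :=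
  IsStanleyDecomp I L.toFinset ∧
  ∀ j : ℕ, 1 ≤ j → j ≤ L.length →
    IsStanleyDecomp
      (I ⊔ Ideal.span ((fun p : (Fin n →₀ ℕ) × Finset (Fin n) => monomial p.1 (1 : k)) ''
        {p | p ∈ L.drop j}))
      (L.take j).toFinset


namespace StanleyProofAux

def sdeg {n : ℕ} (u : Fin n →₀ ℕ) : ℕ := ∑ i, u i

lemma sdeg_mono {n : ℕ} {u v : Fin n →₀ ℕ} (h : u ≤ v) : sdeg u ≤ sdeg v :=
  Finset.sum_le_sum fun i _ => Finsupp.le_def.mp h i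

lemma sdeg_eq_of_le {n : ℕ} {u v : Fin n →₀ ℕ} (h : u ≤ v) (hd : sdeg v ≤ sdeg u) : u = v := by
  have hsum : ∑ i, u i = ∑ i, v i := le_antisymm (sdeg_mono h) hd
  have := (Finset.sum_eq_sum_iff_of_le (fun i _ => Finsupp.le_def.mp h i)).mp hsum
  ext i
  exact this i (Finset.mem_univ i)

lemma sdeg_eq_zero {n : ℕ} {u : Fin n →₀ ℕ} (h : sdeg u = 0) : u = 0 := by
  have := Finset.sum_eq_zero_iff.mp h
  ext i; simpa using this i (Finset.mem_univ i)

lemma mem_monomial_span_iff {k : Type} [Field k] {n : ℕ} {G : Set (Fin n →₀ ℕ)} {w : Fin n →₀ ℕ} :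
    monomial w (1 : k) ∈ Ideal.span ((fun u => (monomial u (1 : k))) '' G) ↔ ∃ g ∈ G, g ≤ w := by
  rw [mem_ideal_span_monomial_image]
  simp [support_monomial]

theorem stanley_aux {k : Type} [Field k] {n : ℕ} (I : Ideal (MvPolynomial (Fin n) k))
    (G₀ : Finset (Fin n →₀ ℕ))
    (hIeq : I = Ideal.span ((fun u => (monomial u (1 : k))) '' (↑G₀ : Set (Fin n →₀ ℕ))))
    (hproper : I ≠ ⊤) :
    ∃ (m : ℕ) (hm : 0 < m) (f : Fin m → (Fin n →₀ ℕ) × Finset (Fin n)),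
      IsStanleyFiltration I (List.ofFn f) ∧
      (f ⟨0, hm⟩).1 = 0 ∧
      ∀ i : Fin m, (f i).1 ≠ 0 →
        ∃ j : Fin m, (j : ℕ) < (i : ℕ) ∧
          ∃ ℓ : Fin n, ℓ ∉ (f j).2 ∧ (f i).1 = (f j).1 + Finsupp.single ℓ 1 := by
  classical
  have hI : ∀ w, monomial w (1:k) ∈ I ↔ ∃ g ∈ G₀, g ≤ w := by
    intro w; rw [hIeq, mem_monomial_span_iff]; simp
  have h1 : monomial (0 : Fin n →₀ ℕ) (1:k) ∉ I := by
    intro h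
    rw [show monomial (0 : Fin n →₀ ℕ) (1:k) = 1 by simp [monomial_zero']] at h
    exact hproper ((Ideal.eq_top_iff_one I).mpr h)
  set a : Fin n →₀ ℕ := G₀.sup id with ha_def
  have ha : ∀ g ∈ G₀, g ≤ a := fun g hg => Finset.le_sup (f := id) hg
  set F : Finset (Fin n →₀ ℕ) :=
    (Finset.Iic a).filter (fun u => monomial u (1:k) ∉ I) with hF_def
  have hFmem : ∀ u, u ∈ F ↔ (u ≤ a ∧ monomial u (1:k) ∉ I) := by
    intro u; simp [hF_def, Finset.mem_Iic]
  set sig : (Fin n →₀ ℕ) → Finset (Fin n) :=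
    fun u => Finset.univ.filter (fun i => u i = a i) with hsig_def
  have hsigmem : ∀ u i, i ∈ sig u ↔ u i = a i := by intro u i; simp [hsig_def]
  -- uniqueness of the canonical representative
  have C2 : ∀ u w, u ≤ a → w ∈ stanleyPairSet u (sig u) → u = w ⊓ a := by
    intro u w hua hw
    obtain ⟨v, hv, rfl⟩ := hw
    ext i
    rw [Finsupp.inf_apply, Finsupp.add_apply]
    rcases eq_or_ne (v i) 0 with h0 | h0
    · rw [h0, add_zero]
      exact (min_eq_left (Finsupp.le_def.mp hua i)).symm
    · have hui : u i = a i := (hsigmem u i).mp (hv i h0)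
      omega
  -- pair sets of admissible corners avoid I
  have C3 : ∀ u w, u ∈ F → w ∈ stanleyPairSet u (sig u) → monomial w (1:k) ∉ I := by
    intro u w huF hw hwI
    obtain ⟨v, hv, rfl⟩ := hw
    obtain ⟨hua, huI⟩ := (hFmem u).mp huF
    obtain ⟨g, hgG, hgw⟩ := (hI _).mp hwI
    refine huI ((hI u).mpr ⟨g, hgG, Finsupp.le_def.mpr fun i => ?_⟩)
    rcases eq_or_ne (u i) (a i) with hia | hia
    · exact (Finsupp.le_def.mp (ha g hgG) i).trans (le_of_eq hia.symm)
    · have hvi : v i = 0 := by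
        by_contra hvi
        exact hia ((hsigmem u i).mp (hv i hvi))
      have := Finsupp.le_def.mp hgw i
      rw [Finsupp.add_apply, hvi, add_zero] at this
      exact this
  -- coverage
  have C1 : ∀ w, monomial w (1:k) ∉ I →
      (w ⊓ a ∈ F ∧ w ∈ stanleyPairSet (w ⊓ a) (sig (w ⊓ a))) := by
    intro w hwI
    have hle : w ⊓ a ≤ w := inf_le_left
    constructor
    · rw [hFmem]
      refine ⟨inf_le_right, fun hmem => hwI ?_⟩
      obtain ⟨g, hg, hgu⟩ := (hI _).mp hmem
      exact (hI w).mpr ⟨g, hg, le_trans hgu hle⟩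
    · refine ⟨w - w ⊓ a, ?_, (add_tsub_cancel_of_le hle).symm⟩
      intro i hvi
      rw [hsigmem, Finsupp.inf_apply]
      rw [Finsupp.tsub_apply, Finsupp.inf_apply] at hvi
      omega
  -- the sorted list of corners
  set ledeg : (Fin n →₀ ℕ) → (Fin n →₀ ℕ) → Bool := fun u v => decide (sdeg u ≤ sdeg v)
    with hledeg
  set L : List (Fin n →₀ ℕ) := F.toList.mergeSort ledeg with hL_def
  have hperm : List.Perm L F.toList := List.mergeSort_perm _ _
  have hLmem : ∀ u, u ∈ L ↔ u ∈ F := fun u => by rw [hperm.mem_iff, Finset.mem_toList]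
  have hLnodup : L.Nodup := hperm.nodup_iff.mpr F.nodup_toList
  have hLsorted : L.Pairwise (fun u v => sdeg u ≤ sdeg v) := by
    have h := List.pairwise_mergeSort (le := ledeg)
      (fun a b c h1 h2 => by
        simp only [hledeg, decide_eq_true_eq] at h1 h2 ⊢; omega)
      (fun a b => by simp only [hledeg, Bool.or_eq_true, decide_eq_true_eq]; omega)
      F.toList
    rw [← hL_def] at h
    exact h.imp (fun hab => by simpa [hledeg] using hab)
  set m := L.length with hm_def
  have h0F : (0 : Fin n →₀ ℕ) ∈ F := (hFmem 0).mpr ⟨zero_le, h1⟩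
  have hm : 0 < m := List.length_pos_iff.mpr (List.ne_nil_of_mem ((hLmem 0).mpr h0F))
  set gσ : (Fin n →₀ ℕ) → (Fin n →₀ ℕ) × Finset (Fin n) := fun u => (u, sig u) with hgσ
  set f : Fin m → (Fin n →₀ ℕ) × Finset (Fin n) := fun i => gσ (L.get i) with hf
  have hofn : List.ofFn f = L.map gσ := by
    rw [hf]
    rw [show (fun i => gσ (L.get i)) = gσ ∘ L.get from rfl, ← List.map_ofFn (f := L.get) (g := gσ),
      List.ofFn_get]
  -- membership in the extended ideals
  have hIj : ∀ (D : Set (Fin n →₀ ℕ)) (w : Fin n →₀ ℕ),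
      monomial w (1:k) ∈ I ⊔ Ideal.span ((fun u => monomial u (1:k)) '' D) ↔
        ((∃ g ∈ G₀, g ≤ w) ∨ ∃ u ∈ D, u ≤ w) := by
    intro D w
    rw [hIeq, ← Ideal.span_union, ← Set.image_union, mem_monomial_span_iff]
    constructor
    · rintro ⟨g, hg | hg, hgw⟩
      · exact Or.inl ⟨g, hg, hgw⟩
      · exact Or.inr ⟨g, hg, hgw⟩
    · rintro (⟨g, hg, hgw⟩ | ⟨g, hg, hgw⟩)
      · exact ⟨g, Or.inl hg, hgw⟩
      · exact ⟨g, Or.inr hg, hgw⟩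
  -- the prefix decompositions
  have hprefix : ∀ j : ℕ,
      IsStanleyDecomp (I ⊔ Ideal.span ((fun u => monomial u (1:k)) '' {u | u ∈ L.drop j}))
        ((L.take j).map gσ).toFinset := by
    intro j
    have hsplit : L.take j ++ L.drop j = L := List.take_append_drop j L
    have hpw : ∀ u ∈ L.take j, ∀ u' ∈ L.drop j, sdeg u ≤ sdeg u' := by
      have : (L.take j ++ L.drop j).Pairwise (fun u v => sdeg u ≤ sdeg v) := by
        rw [hsplit]; exact hLsorted
      exact (List.pairwise_append.mp this).2.2
    have hdisj : List.Disjoint (L.take j) (L.drop j) := by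
      apply List.disjoint_of_nodup_append
      rw [hsplit]; exact hLnodup
    constructor
    · intro p hp q hq hpq
      rw [List.mem_toFinset, List.mem_map] at hp hq
      obtain ⟨u, hu, rfl⟩ := hp
      obtain ⟨u', hu', rfl⟩ := hq
      have huF : u ∈ F := (hLmem u).mp (List.mem_of_mem_take hu)
      have huF' : u' ∈ F := (hLmem u').mp (List.mem_of_mem_take hu')
      rw [Set.disjoint_left]
      intro w hw hw'
      have e1 := C2 u w ((hFmem u).mp huF).1 hw
      have e2 := C2 u' w ((hFmem u').mp huF').1 hw'
      cases e1.trans e2.symm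
      exact hpq rfl
    · ext w
      simp only [Finset.coe_sort_coe, Set.mem_iUnion, Finset.mem_coe, List.mem_toFinset,
        List.mem_map, Set.mem_setOf_eq, exists_prop]
      constructor
      · rintro ⟨p, ⟨u, hu, rfl⟩, hw⟩
        have huF : u ∈ F := (hLmem u).mp (List.mem_of_mem_take hu)
        rw [hIj]
        rintro (hg | ⟨u', hu', hu'w⟩)
        · exact C3 u w huF hw ((hI w).mpr hg)
        · have hu'F : u' ∈ F := (hLmem u').mp ((hsplit ▸ List.mem_append_right (L.take j) hu'))
          have hu'a : u' ≤ a := ((hFmem u').mp hu'F).1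
          have hu'u : u' ≤ u := by
            rw [C2 u w ((hFmem u).mp huF).1 hw]
            exact le_inf hu'w hu'a
          have : u' = u := sdeg_eq_of_le hu'u (hpw u hu u' hu')
          exact hdisj hu (this ▸ hu')
      · intro hw
        rw [hIj] at hw
        push_neg at hw
        have hwI : monomial w (1:k) ∉ I := fun h => by
          obtain ⟨g, hg1, hg2⟩ := (hI w).mp h
          exact hw.1 g hg1 hg2
        obtain ⟨huF, hwpair⟩ := C1 w hwI
        have huL : w ⊓ a ∈ L := (hLmem _).mpr huF
        rw [← hsplit, List.mem_append] at huL
        rcases huL with huL | huL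
        · exact ⟨gσ (w ⊓ a), ⟨w ⊓ a, huL, rfl⟩, hwpair⟩
        · exact absurd inf_le_left (hw.2 (w ⊓ a) huL)
  -- conversion of the span sets appearing in the filtration
  have himg : ∀ j : ℕ,
      (fun p : (Fin n →₀ ℕ) × Finset (Fin n) => monomial p.1 (1:k)) ''
          {p | p ∈ (L.map gσ).drop j}
        = (fun u => monomial u (1:k)) '' {u | u ∈ L.drop j} := by
    intro j
    rw [← List.map_drop]
    ext x
    simp only [Set.mem_image, Set.mem_setOf_eq, List.mem_map]
    constructor
    · rintro ⟨p, ⟨u, hu, rfl⟩, rfl⟩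
      exact ⟨u, hu, rfl⟩
    · rintro ⟨u, hu, rfl⟩
      exact ⟨gσ u, ⟨u, hu, rfl⟩, rfl⟩
  refine ⟨m, hm, f, ⟨?_, ?_⟩, ?_, ?_⟩
  · -- full Stanley decomposition
    rw [hofn]
    have h := hprefix m
    rw [hm_def] at h
    rw [List.take_length, List.drop_length] at h
    have : {u : Fin n →₀ ℕ | u ∈ ([] : List (Fin n →₀ ℕ))} = ∅ := by simp
    rw [this, Set.image_empty, Ideal.span_empty, sup_bot_eq] at h
    exact h
  · -- prefix decompositions
    intro j hj1 hjlen
    rw [hofn, himg j, ← List.map_take]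
    exact hprefix j
  · -- first corner is 0
    obtain ⟨i₀, hi₀⟩ := List.mem_iff_get.mp ((hLmem 0).mpr h0F)
    rcases eq_or_ne i₀ ⟨0, hm⟩ with heq | hne
    · show L.get ⟨0, hm⟩ = 0
      rw [← heq]
      exact hi₀
    · have hlt : (⟨0, hm⟩ : Fin m) < i₀ := by
        have h0 : (⟨0, hm⟩ : Fin m).val = 0 := rfl
        have hv := Fin.val_ne_of_ne hne
        rw [Fin.lt_def]
        omega
      have hs : sdeg (L.get ⟨0, hm⟩) ≤ sdeg (L.get i₀) := hLsorted.rel_get_of_lt hlt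
      rw [hi₀] at hs
      show L.get ⟨0, hm⟩ = 0
      exact sdeg_eq_zero (by simpa [sdeg] using hs)
  · -- structured condition
    intro i hne
    have hne0 : L.get i ≠ 0 := hne
    set u := L.get i with hu_def
    have huF : u ∈ F := (hLmem u).mp (List.get_mem L i)
    obtain ⟨hua, huI⟩ := (hFmem u).mp huF
    have hex : ∃ ℓ, u ℓ ≠ 0 := by
      by_contra h
      push_neg at h
      exact hne0 (by ext ℓ; simpa using h ℓ)
    obtain ⟨ℓ, hℓ⟩ := hex
    set u' := u - Finsupp.single ℓ 1 with hu'_def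
    have hsle : Finsupp.single ℓ 1 ≤ u := Finsupp.single_le_iff.mpr (Nat.one_le_iff_ne_zero.mpr hℓ)
    have hadd : u' + Finsupp.single ℓ 1 = u := tsub_add_cancel_of_le hsle
    have hu'le : u' ≤ u := tsub_le_self
    have hu'F : u' ∈ F := by
      rw [hFmem]
      refine ⟨le_trans hu'le hua, fun hmem => huI ?_⟩
      obtain ⟨g, hg, hgu⟩ := (hI _).mp hmem
      exact (hI u).mpr ⟨g, hg, le_trans hgu hu'le⟩
    have hu'ℓ : u' ℓ = u ℓ - 1 := by
      rw [hu'_def, Finsupp.tsub_apply, Finsupp.single_eq_same]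
    have hne' : u' ≠ u := by
      intro h
      rw [h] at hu'ℓ
      omega
    obtain ⟨j', hj'⟩ := List.mem_iff_get.mp ((hLmem u').mpr hu'F)
    have hlt : (j' : ℕ) < (i : ℕ) := by
      rcases lt_trichotomy (j' : ℕ) (i : ℕ) with h | h | h
      · exact h
      · exact absurd (by rw [← hj', hu_def]; congr 1; exact Fin.ext h) hne'
      · exfalso
        have hs : sdeg (L.get i) ≤ sdeg (L.get j') := hLsorted.rel_get_of_lt (Fin.lt_def.mpr h)
        rw [hj'] at hs
        exact hne' (sdeg_eq_of_le hu'le hs)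
    refine ⟨j', hlt, ℓ, ?_, ?_⟩
    · show ℓ ∉ sig (L.get j')
      rw [hj', hsigmem]
      have h1 := Finsupp.le_def.mp hua ℓ
      omega
    · show L.get i = L.get j' + Finsupp.single ℓ 1
      rw [hj', ← hu_def, ← hadd]

end StanleyProofAux

/-- every proper monomial ideal admits a Stanley filtration
`(x^{u_1},σ_1),…,(x^{u_m},σ_m)` with `u_1 = 0` and such that every `u_i ≠ 0` is obtained
as `u_i = u_j + e_ℓ` for some earlier index `j < i` and some `ℓ ∉ σ_j`. -/
theorem exists_stanley_filtration_structured {k : Type} [Field k] {n : ℕ}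
    (I : Ideal (MvPolynomial (Fin n) k)) (hmon : IsMonomialIdeal I) (hproper : I ≠ ⊤) :
    ∃ (m : ℕ) (hm : 0 < m) (f : Fin m → (Fin n →₀ ℕ) × Finset (Fin n)),
      IsStanleyFiltration I (List.ofFn f) ∧
      (f ⟨0, hm⟩).1 = 0 ∧
      ∀ i : Fin m, (f i).1 ≠ 0 →
        ∃ j : Fin m, (j : ℕ) < (i : ℕ) ∧
          ∃ ℓ : Fin n, ℓ ∉ (f j).2 ∧ (f i).1 = (f j).1 + Finsupp.single ℓ 1 := by
  classical
  obtain ⟨G, hG⟩ := hmon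
  have hfg : I.FG := IsNoetherian.noetherian I
  obtain ⟨S, hS⟩ := hfg
  have key : ∀ s : Finset (MvPolynomial (Fin n) k),
      (↑s : Set (MvPolynomial (Fin n) k)) ⊆
        (Ideal.span ((fun u => monomial u (1:k)) '' G) : Set (MvPolynomial (Fin n) k)) →
      ∃ T : Finset (MvPolynomial (Fin n) k),
        (↑T : Set (MvPolynomial (Fin n) k)) ⊆ (fun u => monomial u (1:k)) '' G ∧
        (↑s : Set (MvPolynomial (Fin n) k)) ⊆
          (Ideal.span (↑T : Set (MvPolynomial (Fin n) k)) : Set (MvPolynomial (Fin n) k)) := by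
    intro s
    induction s using Finset.induction_on with
    | empty => intro _; exact ⟨∅, by simp, by simp⟩
    | @insert a s ha ih =>
      intro hsub
      have hmemA : a ∈ Ideal.span ((fun u => monomial u (1:k)) '' G) := hsub (by simp)
      obtain ⟨Ta, hTa, haTa⟩ := Submodule.mem_span_finite_of_mem_span hmemA
      have hsub' : (↑s : Set (MvPolynomial (Fin n) k)) ⊆
          (Ideal.span ((fun u => monomial u (1:k)) '' G) : Set (MvPolynomial (Fin n) k)) := by
        intro x hx
        refine hsub ?_
        rw [Finset.coe_insert]
        exact Set.mem_insert_iff.mpr (Or.inr hx)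
      obtain ⟨T, hT1, hT2⟩ := ih hsub'
      refine ⟨T ∪ Ta, ?_, ?_⟩
      · rw [Finset.coe_union]
        exact Set.union_subset hT1 hTa
      · intro x hx
        rw [Finset.coe_insert, Set.mem_insert_iff] at hx
        rcases hx with rfl | hx
        · exact Ideal.span_mono (by rw [Finset.coe_union]; exact Set.subset_union_right) haTa
        · exact Ideal.span_mono (by rw [Finset.coe_union]; exact Set.subset_union_left) (hT2 hx)
  have hin : (↑S : Set (MvPolynomial (Fin n) k)) ⊆
      (Ideal.span ((fun u => monomial u (1:k)) '' G) : Set (MvPolynomial (Fin n) k)) := by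
    rw [← hG]
    intro x hx
    rw [← hS]
    exact Ideal.subset_span hx
  obtain ⟨T, hT1, hT2⟩ := key S hin
  have hIT : I = Ideal.span (↑T : Set (MvPolynomial (Fin n) k)) := by
    apply le_antisymm
    · rw [← hS]
      exact Ideal.span_le.mpr hT2
    · rw [hG]
      exact Ideal.span_le.mpr (hT1.trans Ideal.subset_span)
  obtain ⟨u, huG, huT⟩ := Set.subset_image_iff.mp hT1
  have hinj : Function.Injective (fun v : Fin n →₀ ℕ => monomial v (1:k)) :=
    monomial_left_injective one_ne_zero
  have hufin : u.Finite :=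
    Set.Finite.of_finite_image (huT ▸ T.finite_toSet) hinj.injOn
  have hG₀ : I = Ideal.span
      ((fun v => monomial v (1:k)) '' (↑hufin.toFinset : Set (Fin n →₀ ℕ))) := by
    rw [hIT, ← huT]
    congr 1
    rw [Set.Finite.coe_toFinset]
  exact StanleyProofAux.stanley_aux I hufin.toFinset hG₀ hproper
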